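/- arXiv:1003.2512 — 4 statements merged into one kernel-verified Lean document; each statement's English description precedes it below -/
import Mathlib

section
/- Let H be a free abelian group of finite rank, let L = Lie(H) be the free Lie ring on H with canonical map ι : H → L, and let β : H ⊗ Λ²H → L be the homomorphism of abelian groups determined by x ⊗ (y ∧ z) ↦ [ι(x), [ι(y), ι(z)]]. Then the homomorphism j : Λ³H → H ⊗ Λ²H determined by a ∧ b ∧ c ↦ a ⊗ (b ∧ c) + c ⊗ (a ∧ b) + b ⊗ (c ∧ a) is injective, and its image is exactly the kernel of β. (This is the identification Λ³H ≅ D₃(H) of the target of the first Johnson homomorphism, where D₃(H) is the kernel of the bracket map H ⊗ Lie₂(H) → Lie₃(H).) -/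
set_option maxHeartbeats 1600000
open scoped TensorProduct

universe u

noncomputable def wedgeMk (R : Type*) (M : Type*) [CommRing R] [AddCommGroup M] [Module R M]
    (n : ℕ) (v : Fin n → M) : ⋀[R]^n M :=
  ⟨ExteriorAlgebra.ιMulti R n v, ExteriorAlgebra.ιMulti_range R n ⟨v, rfl⟩⟩

namespace JAux

variable {H : Type u} [AddCommGroup H]

local notation "ιE" => ExteriorAlgebra.ι ℤ (M := H)

lemma mem2 (x y : H) : ιE x * ιE y ∈ ⋀[ℤ]^2 H := by
  rw [show (⋀[ℤ]^2 H) = LinearMap.range (ExteriorAlgebra.ι ℤ (M := H)) *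
      LinearMap.range (ExteriorAlgebra.ι ℤ (M := H)) from by rw [← sq]]
  exact Submodule.mul_mem_mul (LinearMap.mem_range_self _ x) (LinearMap.mem_range_self _ y)

/-- bilinear wedge into the second exterior power -/
noncomputable def w2 : H →ₗ[ℤ] H →ₗ[ℤ] ↥(⋀[ℤ]^2 H) :=
  LinearMap.mk₂ ℤ (fun x y => ⟨ιE x * ιE y, mem2 x y⟩)
    (fun x x' y => Subtype.ext <| by simp [add_mul])
    (fun s x y => Subtype.ext <| by
      show ιE (s • x) * ιE y = ((s • ⟨ιE x * ιE y, mem2 x y⟩ : ↥(⋀[ℤ]^2 H)) :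
        ExteriorAlgebra ℤ H)
      rw [SetLike.val_smul, map_smul, smul_mul_assoc])
    (fun x y y' => Subtype.ext <| by simp [mul_add])
    (fun s x y => Subtype.ext <| by
      show ιE x * ιE (s • y) = ((s • ⟨ιE x * ιE y, mem2 x y⟩ : ↥(⋀[ℤ]^2 H)) :
        ExteriorAlgebra ℤ H)
      rw [SetLike.val_smul, map_smul, mul_smul_comm])

@[simp] lemma w2_val (x y : H) : (w2 x y : ExteriorAlgebra ℤ H) = ιE x * ιE y := by
  simp [w2]

lemma wedge2_eq (y z : H) : wedgeMk ℤ H 2 ![y, z] = w2 y z := by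
  apply Subtype.ext
  show ExteriorAlgebra.ιMulti ℤ 2 ![y,z] = _
  rw [ExteriorAlgebra.ιMulti_apply]
  simp [List.ofFn_succ]

lemma wedge3_val (v : Fin 3 → H) :
    ((wedgeMk ℤ H 3 v : ⋀[ℤ]^3 H) : ExteriorAlgebra ℤ H) = ιE (v 0) * ιE (v 1) * ιE (v 2) := by
  show ExteriorAlgebra.ιMulti ℤ 3 v = _
  rw [ExteriorAlgebra.ιMulti_apply]
  simp [List.ofFn_succ, mul_assoc]

lemma vec3_eta (v : Fin 3 → H) : v = ![v 0, v 1, v 2] := by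
  funext i; fin_cases i <;> rfl

lemma vec2_eta (v : Fin 2 → H) : v = ![v 0, v 1] := by
  funext i; fin_cases i <;> rfl

/-- the wedges span the exterior power -/
lemma wedge_span (n : ℕ) :
    Submodule.span ℤ (Set.range (wedgeMk ℤ H n)) = (⊤ : Submodule ℤ ↥(⋀[ℤ]^n H)) := by
  rw [Submodule.eq_top_iff']
  intro x
  have hx : (x : ExteriorAlgebra ℤ H) ∈ Submodule.span ℤ
      (Set.range (ExteriorAlgebra.ιMulti ℤ n (M := H))) := by
    rw [ExteriorAlgebra.ιMulti_span_fixedDegree]; exact x.2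
  have : (x : ExteriorAlgebra ℤ H) ∈ Submodule.map (Submodule.subtype (⋀[ℤ]^n H))
      (Submodule.span ℤ (Set.range (wedgeMk ℤ H n))) := by
    rw [Submodule.map_span]
    refine Submodule.span_mono ?_ hx
    rintro _ ⟨v, rfl⟩
    exact ⟨wedgeMk ℤ H n v, ⟨v, rfl⟩, rfl⟩
  rcases this with ⟨y, hy, hyx⟩
  rwa [show y = x from Subtype.ext hyx] at hy

/-- pure tensors with wedges span `H ⊗ Λ²H` -/
lemma tensor_span :
    Submodule.span ℤ {t : H ⊗[ℤ] ↥(⋀[ℤ]^2 H) | ∃ x y z : H, t = x ⊗ₜ[ℤ] wedgeMk ℤ H 2 ![y, z]}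
      = ⊤ := by
  rw [Submodule.eq_top_iff']
  intro t
  induction t with
  | zero => exact zero_mem _
  | add a b ha hb => exact add_mem ha hb
  | tmul x ω =>
    have hω : ω ∈ (⊤ : Submodule ℤ ↥(⋀[ℤ]^2 H)) := trivial
    rw [← wedge_span 2] at hω
    induction hω using Submodule.span_induction with
    | mem w hw =>
      rcases hw with ⟨v, rfl⟩
      exact Submodule.subset_span ⟨x, v 0, v 1, by rw [← vec2_eta]⟩
    | zero => rw [TensorProduct.tmul_zero]; exact zero_mem _
    | add a b _ _ ha hb => rw [TensorProduct.tmul_add]; exact add_mem ha hb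
    | smul s a _ ha => rw [TensorProduct.tmul_smul]; exact Submodule.smul_mem _ s ha


section LL

variable (j : ↥(⋀[ℤ]^3 H) →ₗ[ℤ] (H ⊗[ℤ] ↥(⋀[ℤ]^2 H)))

/-- carrier of the auxiliary nilpotent Lie ring -/
abbrev LL : Type u :=
  H × ↥(⋀[ℤ]^2 H) × ((H ⊗[ℤ] ↥(⋀[ℤ]^2 H)) ⧸ LinearMap.range j)

noncomputable def qq : (H ⊗[ℤ] ↥(⋀[ℤ]^2 H)) →ₗ[ℤ]
    ((H ⊗[ℤ] ↥(⋀[ℤ]^2 H)) ⧸ LinearMap.range j) := (LinearMap.range j).mkQ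

variable (hj : ∀ a b c : H, j (wedgeMk ℤ H 3 ![a, b, c]) =
        a ⊗ₜ[ℤ] wedgeMk ℤ H 2 ![b, c] + c ⊗ₜ[ℤ] wedgeMk ℤ H 2 ![a, b]
          + b ⊗ₜ[ℤ] wedgeMk ℤ H 2 ![c, a])

include hj in
lemma qq_jacobi (a b c : H) :
    qq j (a ⊗ₜ[ℤ] w2 b c + c ⊗ₜ[ℤ] w2 a b + b ⊗ₜ[ℤ] w2 c a) = 0 := by
  have key : a ⊗ₜ[ℤ] w2 b c + c ⊗ₜ[ℤ] w2 a b + b ⊗ₜ[ℤ] w2 c a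
      = j (wedgeMk ℤ H 3 ![a,b,c]) := by
    rw [hj a b c, wedge2_eq, wedge2_eq, wedge2_eq]
  rw [qq, key, Submodule.mkQ_apply, Submodule.Quotient.mk_eq_zero]
  exact LinearMap.mem_range_self _ _

noncomputable def llBracket (x y : LL j) : LL j :=
  (0, w2 x.1 y.1, qq j (x.1 ⊗ₜ[ℤ] y.2.1 - y.1 ⊗ₜ[ℤ] x.2.1))

lemma w2_swap (x y : H) : w2 y x = - w2 x y := by
  refine eq_neg_of_add_eq_zero_left (Subtype.ext ?_)
  rw [Submodule.coe_add, w2_val, w2_val, ExteriorAlgebra.ι_add_mul_swap,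
    ZeroMemClass.coe_zero]

noncomputable def llLieRing : LieRing (LL j) :=
  { (inferInstance : AddCommGroup (LL j)) with
    bracket := llBracket j
    add_lie := fun x y z => by
      simp only [llBracket, Prod.fst_add, Prod.snd_add, map_add, LinearMap.add_apply,
        TensorProduct.add_tmul, TensorProduct.tmul_add, Prod.mk_add_mk, Prod.ext_iff]
      refine ⟨by abel, trivial, ?_⟩
      rw [← map_add]; congr 1; abel
    lie_add := fun x y z => by
      simp only [llBracket, Prod.fst_add, Prod.snd_add, map_add, LinearMap.add_apply,
        TensorProduct.add_tmul, TensorProduct.tmul_add, Prod.mk_add_mk, Prod.ext_iff]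
      refine ⟨by abel, trivial, ?_⟩
      rw [← map_add]; congr 1; abel
    lie_self := fun x => by
      simp only [llBracket, sub_self, map_zero, Prod.ext_iff]
      refine ⟨rfl, ?_, rfl⟩
      apply Subtype.ext
      simp only [w2_val, ExteriorAlgebra.ι_sq_zero]; rfl
    leibniz_lie := fun x y z => by
      simp only [llBracket, Prod.mk_add_mk, Prod.ext_iff]
      refine ⟨by simp, by simp, ?_⟩
      simp only [TensorProduct.tmul_zero, TensorProduct.zero_tmul, sub_zero, zero_sub,
        map_neg]
      have key := qq_jacobi j hj x.1 y.1 z.1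
      have hw : w2 z.1 x.1 = - w2 x.1 z.1 := w2_swap x.1 z.1
      rw [show x.1 ⊗ₜ[ℤ] (w2 y.1 z.1 : ↥(⋀[ℤ]^2 H)) =
        (x.1 ⊗ₜ[ℤ] w2 y.1 z.1 + z.1 ⊗ₜ[ℤ] w2 x.1 y.1 + y.1 ⊗ₜ[ℤ] w2 z.1 x.1)
          - z.1 ⊗ₜ[ℤ] w2 x.1 y.1 - y.1 ⊗ₜ[ℤ] w2 z.1 x.1 by abel]
      rw [map_sub, map_sub, key, zero_sub, hw, TensorProduct.tmul_neg, map_neg]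
      abel }

end LL

section Retraction

variable [Module.Free ℤ H] [Module.Finite ℤ H]

lemma exists_retraction :
    ∃ ψ : (H ⊗[ℤ] ↥(⋀[ℤ]^2 H)) →ₗ[ℤ] ExteriorAlgebra ℤ H,
      ∀ a b c : H, ψ (a ⊗ₜ[ℤ] w2 b c + c ⊗ₜ[ℤ] w2 a b + b ⊗ₜ[ℤ] w2 c a)
        = ιE a * ιE b * ιE c := by
  classical
  set n := Fintype.card (Module.Free.ChooseBasisIndex ℤ H) with hn
  let b : Module.Basis (Fin n) ℤ H :=
    (Module.Free.chooseBasis ℤ H).reindex (Fintype.equivFin _)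
  -- the "kill small indices" projections
  set π : Fin n → H →ₗ[ℤ] H :=
    fun i => ∑ k ∈ Finset.univ.filter (fun k => i < k), (b.coord k).smulRight (b k) with hπdef
  have hπ : ∀ i p, π i (b p) = if i < p then b p else 0 := by
    intro i p
    rw [hπdef]
    simp only [LinearMap.coe_sum, Finset.sum_apply, LinearMap.smulRight_apply,
      Module.Basis.coord_apply, Module.Basis.repr_self, Finsupp.single_apply, ite_smul, one_smul, zero_smul]
    rw [Finset.sum_ite_eq (Finset.univ.filter (fun k => i < k)) p (fun k => b k)]
    simp [Finset.mem_filter]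
  set g : Fin n → ↥(⋀[ℤ]^2 H) →ₗ[ℤ] ExteriorAlgebra ℤ H :=
    fun i => (LinearMap.mulLeft ℤ (ιE (b i))).comp
      ((ExteriorAlgebra.map (π i)).toLinearMap.comp (Submodule.subtype _)) with hgdef
  set B : H →ₗ[ℤ] ↥(⋀[ℤ]^2 H) →ₗ[ℤ] ExteriorAlgebra ℤ H :=
    ∑ i, (b.coord i).smulRight (g i) with hBdef
  have hB : ∀ p (ω : ↥(⋀[ℤ]^2 H)), B (b p) ω = ιE (b p) * ExteriorAlgebra.map (π p) ω.val := by
    intro p ω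
    rw [hBdef]
    simp only [LinearMap.coe_sum, Finset.sum_apply, LinearMap.smulRight_apply,
      Module.Basis.coord_apply, Module.Basis.repr_self, Finsupp.single_apply, ite_smul, one_smul, zero_smul]
    have hsummand : ∀ c, ((if p = c then g c else 0 : ↥(⋀[ℤ]^2 H) →ₗ[ℤ] ExteriorAlgebra ℤ H) ω)
        = (if p = c then g c ω else 0) := by
      intro c; split_ifs <;> rfl
    simp only [hsummand]
    rw [Finset.sum_ite_eq Finset.univ p (fun k => g k ω)]
    simp [hgdef]
  have hBval : ∀ p q r, B (b p) (w2 (b q) (b r)) =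
      if p < q then (if p < r then ιE (b p) * ιE (b q) * ιE (b r) else 0) else 0 := by
    intro p q r
    rw [hB, w2_val, map_mul, ExteriorAlgebra.map_apply_ι, ExteriorAlgebra.map_apply_ι,
      hπ, hπ]
    split_ifs <;> simp [mul_assoc]
  -- sign identities
  have swap : ∀ x y : H, ιE x * ιE y = -(ιE y * ιE x) := fun x y =>
    eq_neg_of_add_eq_zero_left (ExteriorAlgebra.ι_add_mul_swap x y)
  have Exxy : ∀ x y : H, ιE x * ιE x * ιE y = 0 := by
    intro x y; rw [ExteriorAlgebra.ι_sq_zero, zero_mul]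
  have Exyy : ∀ x y : H, ιE x * ιE y * ιE y = 0 := by
    intro x y; rw [mul_assoc, ExteriorAlgebra.ι_sq_zero, mul_zero]
  have Exyx : ∀ x y : H, ιE x * ιE y * ιE x = 0 := by
    intro x y
    rw [mul_assoc, swap y x, mul_neg, ← mul_assoc, ExteriorAlgebra.ι_sq_zero, zero_mul,
      neg_zero]
  have Erot1 : ∀ x y z : H, ιE z * ιE x * ιE y = ιE x * ιE y * ιE z := by
    intro x y z
    rw [swap z x, neg_mul, mul_assoc, swap z y, mul_neg, neg_neg, ← mul_assoc]
  have Erot2 : ∀ x y z : H, ιE y * ιE z * ιE x = ιE x * ιE y * ιE z := by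
    intro x y z; exact (Erot1 y z x).symm
  -- the trilinear gadget
  let inner : H → H → H →ₗ[ℤ] ExteriorAlgebra ℤ H := fun a v =>
    { toFun := fun c => B a (w2 v c) + B c (w2 a v) + B v (w2 c a) - ιE a * ιE v * ιE c
      map_add' := by
        intro c c'
        simp only [map_add, LinearMap.add_apply, mul_add]
        all_goals abel
      map_smul' := by
        intro s c
        simp only [map_smul, LinearMap.smul_apply, mul_smul_comm, RingHom.id_apply,
          smul_add, smul_sub]
        all_goals abel }
  have inner_apply : ∀ a v c, inner a v c
      = B a (w2 v c) + B c (w2 a v) + B v (w2 c a) - ιE a * ιE v * ιE c := fun _ _ _ => rfl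
  let T : H →ₗ[ℤ] H →ₗ[ℤ] H →ₗ[ℤ] ExteriorAlgebra ℤ H :=
    LinearMap.mk₂ ℤ inner
      (fun a a' v => by
        apply LinearMap.ext; intro c
        simp only [inner_apply, map_add, LinearMap.add_apply, add_mul]
        all_goals abel)
      (fun s a v => by
        apply LinearMap.ext; intro c
        simp only [inner_apply, map_smul, LinearMap.smul_apply, smul_mul_assoc,
          smul_add, smul_sub]
        all_goals abel)
      (fun a v v' => by
        apply LinearMap.ext; intro c
        simp only [inner_apply, map_add, LinearMap.add_apply, add_mul, mul_add]
        all_goals abel)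
      (fun s a v => by
        apply LinearMap.ext; intro c
        simp only [inner_apply, map_smul, LinearMap.smul_apply, smul_mul_assoc,
          mul_smul_comm, smul_add, smul_sub]
        all_goals abel)
  have hT0 : T = 0 := by
    apply b.ext; intro p
    apply b.ext; intro q
    apply b.ext; intro r
    show inner (b p) (b q) (b r) = 0
    rw [inner_apply, hBval p q r, hBval r p q, hBval q r p]
    obtain h1|h1|h1 := lt_trichotomy p q
    · obtain h2|h2|h2 := lt_trichotomy p r
      · obtain h3|h3|h3 := lt_trichotomy q r
        · rw [if_pos (show p < q by omega),
              if_pos (show p < r by omega),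
              if_neg (show ¬ r < p by omega),
              if_pos (show q < r by omega),
              if_neg (show ¬ q < p by omega)]
          simp only [add_zero, zero_add, sub_self]
        · rw [if_pos (show p < q by omega),
              if_pos (show p < r by omega),
              if_neg (show ¬ r < p by omega),
              if_neg (show ¬ q < r by omega)]
          rw [← h3]
          simp only [Exxy, Exyy, Exyx, add_zero, zero_add, sub_self, sub_zero, zero_sub, neg_eq_zero]
        · rw [if_pos (show p < q by omega),
              if_pos (show p < r by omega),
              if_neg (show ¬ r < p by omega),
              if_neg (show ¬ q < r by omega)]
          simp only [add_zero, zero_add, sub_self]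
      · obtain h3|h3|h3 := lt_trichotomy q r
        · exfalso; omega
        · exfalso; omega
        · rw [if_pos (show p < q by omega),
              if_neg (show ¬ p < r by omega),
              if_neg (show ¬ r < p by omega),
              if_neg (show ¬ q < r by omega)]
          rw [← h2]
          simp only [Exxy, Exyy, Exyx, add_zero, zero_add, sub_self, sub_zero, zero_sub, neg_eq_zero]
      · obtain h3|h3|h3 := lt_trichotomy q r
        · exfalso; omega
        · exfalso; omega
        · rw [if_pos (show p < q by omega),
              if_neg (show ¬ p < r by omega),
              if_pos (show r < p by omega),
              if_pos (show r < q by omega),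
              if_neg (show ¬ q < r by omega)]
          rw [Erot1 (b p) (b q) (b r)]
          simp only [add_zero, zero_add, sub_self]
    · obtain h2|h2|h2 := lt_trichotomy p r
      · obtain h3|h3|h3 := lt_trichotomy q r
        · rw [if_neg (show ¬ p < q by omega),
              if_neg (show ¬ r < p by omega),
              if_pos (show q < r by omega),
              if_neg (show ¬ q < p by omega)]
          rw [← h1]
          simp only [Exxy, Exyy, Exyx, add_zero, zero_add, sub_self, sub_zero, zero_sub, neg_eq_zero]
        · exfalso; omega
        · exfalso; omega
      · obtain h3|h3|h3 := lt_trichotomy q r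
        · exfalso; omega
        · rw [if_neg (show ¬ p < q by omega),
              if_neg (show ¬ r < p by omega),
              if_neg (show ¬ q < r by omega)]
          rw [← h1]
          rw [← h2]
          simp only [Exxy, Exyy, Exyx, add_zero, zero_add, sub_self, sub_zero, zero_sub, neg_eq_zero]
        · exfalso; omega
      · obtain h3|h3|h3 := lt_trichotomy q r
        · exfalso; omega
        · exfalso; omega
        · rw [if_neg (show ¬ p < q by omega),
              if_pos (show r < p by omega),
              if_pos (show r < q by omega),
              if_neg (show ¬ q < r by omega)]
          rw [← h1]
          simp only [Exxy, Exyy, Exyx, add_zero, zero_add, sub_self, sub_zero, zero_sub, neg_eq_zero]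
    · obtain h2|h2|h2 := lt_trichotomy p r
      · obtain h3|h3|h3 := lt_trichotomy q r
        · rw [if_neg (show ¬ p < q by omega),
              if_neg (show ¬ r < p by omega),
              if_pos (show q < r by omega),
              if_pos (show q < p by omega)]
          rw [Erot2 (b p) (b q) (b r)]
          simp only [add_zero, zero_add, sub_self]
        · exfalso; omega
        · exfalso; omega
      · obtain h3|h3|h3 := lt_trichotomy q r
        · rw [if_neg (show ¬ p < q by omega),
              if_neg (show ¬ r < p by omega),
              if_pos (show q < r by omega),
              if_pos (show q < p by omega)]
          rw [← h2]
          simp only [Exxy, Exyy, Exyx, add_zero, zero_add, sub_self, sub_zero, zero_sub, neg_eq_zero]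
        · exfalso; omega
        · exfalso; omega
      · obtain h3|h3|h3 := lt_trichotomy q r
        · rw [if_neg (show ¬ p < q by omega),
              if_pos (show r < p by omega),
              if_neg (show ¬ r < q by omega),
              if_pos (show q < r by omega),
              if_pos (show q < p by omega)]
          rw [Erot2 (b p) (b q) (b r)]
          simp only [add_zero, zero_add, sub_self]
        · rw [if_neg (show ¬ p < q by omega),
              if_pos (show r < p by omega),
              if_neg (show ¬ r < q by omega),
              if_neg (show ¬ q < r by omega)]
          rw [← h3]
          simp only [Exxy, Exyy, Exyx, add_zero, zero_add, sub_self, sub_zero, zero_sub, neg_eq_zero]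
        · rw [if_neg (show ¬ p < q by omega),
              if_pos (show r < p by omega),
              if_pos (show r < q by omega),
              if_neg (show ¬ q < r by omega)]
          rw [Erot1 (b p) (b q) (b r)]
          simp only [add_zero, zero_add, sub_self]
  have main : ∀ a v c : H, B a (w2 v c) + B c (w2 a v) + B v (w2 c a)
      = ιE a * ιE v * ιE c := by
    intro a v c
    have h := LinearMap.congr_fun
      (LinearMap.congr_fun (LinearMap.congr_fun hT0 a) v) c
    rw [show T a v c = inner a v c from rfl, inner_apply] at h
    simp only [LinearMap.zero_apply] at h
    exact sub_eq_zero.mp h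
  refine ⟨TensorProduct.lift B, fun a v c => ?_⟩
  refine (?_ : TensorProduct.lift B (a ⊗ₜ[ℤ] w2 v c + c ⊗ₜ[ℤ] w2 a v + v ⊗ₜ[ℤ] w2 c a) = _)
  simp only [map_add, TensorProduct.lift.tmul]
  exact main a v c

end Retraction

end JAux


/-- Let `H` be a free abelian group of finite rank, let `L` (together with the canonical map
`ι : H → L`) be the free Lie ring on `H`, and let `β : H ⊗ Λ²H → L` be the additive map
determined by `x ⊗ (y ∧ z) ↦ [ι x, [ι y, ι z]]`.  Then the additive map `j : Λ³H → H ⊗ Λ²H`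
determined by `a ∧ b ∧ c ↦ a ⊗ (b ∧ c) + c ⊗ (a ∧ b) + b ⊗ (c ∧ a)` is injective, and its image
is exactly the kernel of `β`. -/
theorem stmt_0 (H : Type u) [AddCommGroup H] [Module.Free ℤ H] [Module.Finite ℤ H]
    (L : Type u) [LieRing L] (ι : H →ₗ[ℤ] L)
    (hL : ∀ (L' : Type u) [LieRing L'] (f : H →ₗ[ℤ] L'),
      ∃! F : L →ₗ⁅ℤ⁆ L', ∀ h : H, F (ι h) = f h)
    (β : (H ⊗[ℤ] ↥(⋀[ℤ]^2 H)) →ₗ[ℤ] L)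
    (hβ : ∀ x y z : H, β (x ⊗ₜ[ℤ] wedgeMk ℤ H 2 ![y, z]) = ⁅ι x, ⁅ι y, ι z⁆⁆)
    (j : ↥(⋀[ℤ]^3 H) →ₗ[ℤ] (H ⊗[ℤ] ↥(⋀[ℤ]^2 H)))
    (hj : ∀ a b c : H, j (wedgeMk ℤ H 3 ![a, b, c]) =
        a ⊗ₜ[ℤ] wedgeMk ℤ H 2 ![b, c] + c ⊗ₜ[ℤ] wedgeMk ℤ H 2 ![a, b]
          + b ⊗ₜ[ℤ] wedgeMk ℤ H 2 ![c, a]) :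
    Function.Injective j ∧ LinearMap.range j = LinearMap.ker β := by
  classical
  -- (1) `β ∘ j = 0` by the Jacobi identity
  have hker : β ∘ₗ j = 0 := by
    apply LinearMap.ext_on_range (JAux.wedge_span (H := H) 3)
    intro v
    rw [JAux.vec3_eta v]
    simp only [LinearMap.comp_apply, LinearMap.zero_apply]
    rw [hj, map_add, map_add, hβ, hβ, hβ]
    have hjac := lie_jacobi (ι (v 0)) (ι (v 1)) (ι (v 2))
    rw [← hjac]; abel
  -- (2) injectivity of `j` via the retraction
  obtain ⟨ψ, hψ⟩ := JAux.exists_retraction (H := H)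
  have hcomp : ψ ∘ₗ j = (⋀[ℤ]^3 H).subtype := by
    apply LinearMap.ext_on_range (JAux.wedge_span (H := H) 3)
    intro v
    rw [JAux.vec3_eta v]
    simp only [LinearMap.comp_apply, Submodule.coe_subtype]
    rw [hj, JAux.wedge2_eq, JAux.wedge2_eq, JAux.wedge2_eq, hψ]
    rw [JAux.wedge3_val]
    simp
  have hinj : Function.Injective j := by
    intro x y hxy
    have h1 : ψ (j x) = ψ (j y) := congrArg ψ hxy
    have h2 := LinearMap.congr_fun hcomp x
    have h3 := LinearMap.congr_fun hcomp y
    simp only [LinearMap.comp_apply, Submodule.coe_subtype] at h2 h3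
    rw [h2, h3] at h1
    exact Subtype.ext h1
  -- (3) `ker β ⊆ range j` via the auxiliary nilpotent Lie ring
  letI instLL : LieRing (JAux.LL (H := H) j) := JAux.llLieRing j hj
  let f : H →ₗ[ℤ] JAux.LL (H := H) j := LinearMap.prod LinearMap.id 0
  obtain ⟨F, hF, -⟩ := hL (JAux.LL (H := H) j) f
  let G : (H ⊗[ℤ] ↥(⋀[ℤ]^2 H)) →ₗ[ℤ] JAux.LL (H := H) j :=
    LinearMap.prod 0 (LinearMap.prod 0 (JAux.qq j))
  have hFG : F.toLinearMap ∘ₗ β = G := by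
    apply LinearMap.ext_on (JAux.tensor_span (H := H))
    rintro t ⟨x, y, z, rfl⟩
    simp only [LinearMap.comp_apply, LieHom.coe_toLinearMap]
    rw [hβ, F.map_lie, F.map_lie, hF, hF, hF]
    show JAux.llBracket j (f x) (JAux.llBracket j (f y) (f z)) = G _
    simp only [JAux.llBracket, f, G, LinearMap.prod_apply, Pi.prod, Function.prod, LinearMap.id_apply,
      LinearMap.zero_apply, TensorProduct.tmul_zero, TensorProduct.zero_tmul, sub_zero,
      sub_self, map_zero, JAux.wedge2_eq]
  have hker2 : LinearMap.ker β ≤ LinearMap.range j := by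
    intro z hz
    have hz0 : G z = 0 := by
      calc G z = F (β z) := (LinearMap.congr_fun hFG z).symm
        _ = 0 := by rw [LinearMap.mem_ker.mp hz]; exact F.map_zero
    have hq0 : JAux.qq j z = 0 := congrArg (fun t => t.2.2) hz0
    rwa [JAux.qq, Submodule.mkQ_apply, Submodule.Quotient.mk_eq_zero] at hq0
  exact ⟨hinj, le_antisymm (LinearMap.range_le_ker_iff.mpr hker) hker2⟩
end

section
/- Let G be a group and k ≥ 1. Set Q = G/Γ_{k+2}G. The image of Γ_{k+1}G in Q equals the (k+1)-st lower central subgroup Γ_{k+1}Q, so every automorphism of Q induces an automorphism of Q/Γ_{k+1}Q ≅ G/Γ_{k+1}G, giving a natural group homomorphism r : Aut(G/Γ_{k+2}G) → Aut(G/Γ_{k+1}G). The kernel of r is an abelian subgroup of Aut(G/Γ_{k+2}G), and the map Ψ ↦ (class of x ↦ Ψ({x})·{x}⁻¹) is a group isomorphism from ker(r) onto the group of homomorphisms G/Γ₂G → Γ_{k+1}G/Γ_{k+2}G. -/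
open scoped commutatorElement

/-- Image of the lower central series under a surjective homomorphism. -/
lemma aux_lcs_map {G H : Type*} [Group G] [Group H] (f : G →* H)
    (hf : Function.Surjective f) (n : ℕ) :
    Subgroup.map f ((⊤ : Subgroup G).lowerCentralSeries n) = (⊤ : Subgroup H).lowerCentralSeries n := by
  induction n with
  | zero =>
    simpa using Subgroup.map_top_of_surjective f hf
  | succ n ih =>
    show Subgroup.map f ⁅(⊤ : Subgroup G).lowerCentralSeries n, (⊤ : Subgroup G)⁆
        = ⁅(⊤ : Subgroup H).lowerCentralSeries n, (⊤ : Subgroup H)⁆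
    rw [Subgroup.map_commutator, ih, Subgroup.map_top_of_surjective f hf]

/-- Let `G` be a group and `k ≥ 1`.  Set `Q = G/Γ_{k+2}G` (here `Γ_{i+1}G` is
`(⊤ : Subgroup G).lowerCentralSeries i`).  Then the image of `Γ_{k+1}G` in `Q` equals `Γ_{k+1}Q`, so there is
a (unique) natural group homomorphism `r : Aut(Q) → Aut(Q/Γ_{k+1}Q)` compatible with the
projection.  The kernel of `r` is an abelian subgroup of `Aut(Q)`, and `Ψ ↦ (class of
`x ↦ Ψ(x)·x⁻¹`)` is a group isomorphism from `ker r` onto the group of homomorphisms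
`G/Γ₂G → Γ_{k+1}G/Γ_{k+2}G` (the latter group being identified with the image `A` of
`Γ_{k+1}G` in `Q`). -/
theorem stmt_6 (G : Type*) [Group G] (k : ℕ) (hk : 1 ≤ k) :
    Subgroup.map (QuotientGroup.mk' ((⊤ : Subgroup G).lowerCentralSeries (k + 1))) ((⊤ : Subgroup G).lowerCentralSeries k)
      = (⊤ : Subgroup (G ⧸ (⊤ : Subgroup G).lowerCentralSeries (k + 1))).lowerCentralSeries k ∧
    (∃! r : MulAut (G ⧸ (⊤ : Subgroup G).lowerCentralSeries (k + 1)) →*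
        MulAut ((G ⧸ (⊤ : Subgroup G).lowerCentralSeries (k + 1)) ⧸
          (⊤ : Subgroup (G ⧸ (⊤ : Subgroup G).lowerCentralSeries (k + 1))).lowerCentralSeries k),
      ∀ (Ψ : MulAut (G ⧸ (⊤ : Subgroup G).lowerCentralSeries (k + 1)))
        (q : G ⧸ (⊤ : Subgroup G).lowerCentralSeries (k + 1)),
          r Ψ (QuotientGroup.mk q) = QuotientGroup.mk (Ψ q)) ∧
    (∀ r : MulAut (G ⧸ (⊤ : Subgroup G).lowerCentralSeries (k + 1)) →*
        MulAut ((G ⧸ (⊤ : Subgroup G).lowerCentralSeries (k + 1)) ⧸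
          (⊤ : Subgroup (G ⧸ (⊤ : Subgroup G).lowerCentralSeries (k + 1))).lowerCentralSeries k),
      (∀ (Ψ : MulAut (G ⧸ (⊤ : Subgroup G).lowerCentralSeries (k + 1)))
        (q : G ⧸ (⊤ : Subgroup G).lowerCentralSeries (k + 1)),
          r Ψ (QuotientGroup.mk q) = QuotientGroup.mk (Ψ q)) →
      ((∀ a b : MulAut (G ⧸ (⊤ : Subgroup G).lowerCentralSeries (k + 1)),
          a ∈ r.ker → b ∈ r.ker → a * b = b * a) ∧
       ∃ θ : r.ker ≃ ((G ⧸ (⊤ : Subgroup G).lowerCentralSeries 1) →*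
            ↥(Subgroup.map (QuotientGroup.mk' ((⊤ : Subgroup G).lowerCentralSeries (k + 1)))
              ((⊤ : Subgroup G).lowerCentralSeries k))),
         (∀ (Ψ : r.ker) (g : G),
            (θ Ψ (QuotientGroup.mk g) : G ⧸ (⊤ : Subgroup G).lowerCentralSeries (k + 1))
              = (Ψ : MulAut (G ⧸ (⊤ : Subgroup G).lowerCentralSeries (k + 1))) (QuotientGroup.mk g)
                  * (QuotientGroup.mk g)⁻¹) ∧
         (∀ (Ψ Φ : r.ker) (x : G ⧸ (⊤ : Subgroup G).lowerCentralSeries 1),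
            θ (Ψ * Φ) x = θ Ψ x * θ Φ x))) := by
  set N := (⊤ : Subgroup G).lowerCentralSeries (k + 1) with hN
  set Q := G ⧸ N with hQdef
  set L := (⊤ : Subgroup Q).lowerCentralSeries k with hL
  have hπ : Function.Surjective (QuotientGroup.mk' N) := QuotientGroup.mk'_surjective N
  -- Part 1
  have h1 : Subgroup.map (QuotientGroup.mk' N) ((⊤ : Subgroup G).lowerCentralSeries k) = L :=
    aux_lcs_map _ hπ k
  -- `Γ_{k+2}Q = ⊥`, hence `L` is central in `Q`
  have hbot : (⊤ : Subgroup Q).lowerCentralSeries (k + 1) = ⊥ := by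
    rw [← aux_lcs_map (QuotientGroup.mk' N) hπ (k + 1), Subgroup.map_eq_bot_iff,
      QuotientGroup.ker_mk']
  have hcentral : ∀ l ∈ L, ∀ q : Q, l * q = q * l := by
    intro l hl q
    have hmem : ⁅l, q⁆ ∈ ⁅L, (⊤ : Subgroup Q)⁆ :=
      Subgroup.commutator_mem_commutator hl (Subgroup.mem_top q)
    have : ⁅l, q⁆ ∈ (⊤ : Subgroup Q).lowerCentralSeries (k + 1) := hmem
    rw [hbot, Subgroup.mem_bot] at this
    exact commutatorElement_eq_one_iff_mul_comm.mp this
  have hL1 : L ≤ (⊤ : Subgroup Q).lowerCentralSeries 1 := Subgroup.lowerCentralSeries_antitone _ hk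
  -- coset equality helper
  have hmemL : ∀ a b : Q, (QuotientGroup.mk a : Q ⧸ L) = QuotientGroup.mk b ↔ a * b⁻¹ ∈ L := by
    intro a b
    rw [QuotientGroup.eq]
    constructor
    · intro h
      have h2 : b⁻¹ * a ∈ L := by have := L.inv_mem h; rw [mul_inv_rev, inv_inv] at this; exact this
      have h3 := (Subgroup.lowerCentralSeries_normal (G := Q) ⊤ k).conj_mem _ h2 a
      simpa [mul_assoc] using h3
    · intro h
      have h2 : b * a⁻¹ ∈ L := by have := L.inv_mem h; rw [mul_inv_rev, inv_inv] at this; exact this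
      have h3 := (Subgroup.lowerCentralSeries_normal (G := Q) ⊤ k).conj_mem _ h2 b⁻¹
      have h4 : a⁻¹ * b⁻¹⁻¹ ∈ L := by simpa [mul_assoc] using h3
      rw [inv_inv] at h4; exact h4
  -- Part 2 : existence and uniqueness of `r`
  have hle : ∀ Ψ : MulAut Q, L ≤ L.comap Ψ.toMonoidHom := by
    intro Ψ x hx
    have : Ψ x ∈ Subgroup.map Ψ.toMonoidHom L := ⟨x, hx, rfl⟩
    rwa [aux_lcs_map _ Ψ.surjective k] at this
  have hF : ∀ (Ψ : MulAut Q) (q : Q),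
      QuotientGroup.map L L Ψ.toMonoidHom (hle Ψ) (QuotientGroup.mk q)
        = QuotientGroup.mk (Ψ q) := fun Ψ q => QuotientGroup.map_mk L L _ _ q
  let toAut : MulAut Q → MulAut (Q ⧸ L) := fun Ψ =>
    { toFun := QuotientGroup.map L L Ψ.toMonoidHom (hle Ψ)
      invFun := QuotientGroup.map L L (Ψ⁻¹).toMonoidHom (hle Ψ⁻¹)
      left_inv := by
        intro x
        induction x using QuotientGroup.induction_on with
        | H q => rw [hF, hF]; simp
      right_inv := by
        intro x
        induction x using QuotientGroup.induction_on with
        | H q => rw [hF, hF]; simp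
      map_mul' := map_mul _ }
  have htoAut : ∀ (Ψ : MulAut Q) (q : Q),
      toAut Ψ (QuotientGroup.mk q) = QuotientGroup.mk (Ψ q) := fun Ψ q => hF Ψ q
  let r₀ : MulAut Q →* MulAut (Q ⧸ L) := MonoidHom.mk' toAut (by
    intro a b
    refine MulEquiv.ext fun x => ?_
    induction x using QuotientGroup.induction_on with
    | H q =>
      have h1' : toAut (a * b) (QuotientGroup.mk q) = QuotientGroup.mk ((a * b) q) :=
        htoAut (a * b) q
      have h2' : (toAut a * toAut b) (QuotientGroup.mk q)
          = QuotientGroup.mk (a (b q)) := by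
        show toAut a (toAut b (QuotientGroup.mk q)) = _
        rw [htoAut, htoAut]
      rw [h1', h2']
      rfl)
  refine ⟨h1, ⟨r₀, fun Ψ q => htoAut Ψ q, ?_⟩, ?_⟩
  · -- uniqueness
    intro r' hr'
    refine MonoidHom.ext fun Ψ => MulEquiv.ext fun x => ?_
    induction x using QuotientGroup.induction_on with
    | H q => rw [hr' Ψ q]; exact (htoAut Ψ q).symm
  · -- Part 3
    intro r hr
    have hker : ∀ Ψ : MulAut Q, Ψ ∈ r.ker ↔ ∀ q : Q, Ψ q * q⁻¹ ∈ L := by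
      intro Ψ
      rw [MonoidHom.mem_ker]
      constructor
      · intro h q
        have h2 : (QuotientGroup.mk (Ψ q) : Q ⧸ L) = QuotientGroup.mk q := by
          rw [← hr Ψ q, h, MulAut.one_apply]
        exact (hmemL _ _).mp h2
      · intro h
        refine MulEquiv.ext fun x => ?_
        induction x using QuotientGroup.induction_on with
        | H q =>
          rw [hr Ψ q, MulAut.one_apply]
          exact (hmemL _ _).mpr (h q)
    -- the "difference cocycle" is a homomorphism
    have hd_mul : ∀ Ψ : MulAut Q, (∀ q : Q, Ψ q * q⁻¹ ∈ L) →
        ∀ x y : Q, Ψ (x * y) * (x * y)⁻¹ = (Ψ x * x⁻¹) * (Ψ y * y⁻¹) := by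
      intro Ψ hΨ x y
      have hc := hcentral _ (hΨ y) x⁻¹
      rw [map_mul, mul_inv_rev]
      calc Ψ x * Ψ y * (y⁻¹ * x⁻¹) = Ψ x * ((Ψ y * y⁻¹) * x⁻¹) := by group
        _ = Ψ x * (x⁻¹ * (Ψ y * y⁻¹)) := by rw [hc]
        _ = Ψ x * x⁻¹ * (Ψ y * y⁻¹) := by group
    -- it kills the commutator subgroup of Q
    have hd_lcs1 : ∀ Ψ : MulAut Q, (∀ q : Q, Ψ q * q⁻¹ ∈ L) →
        ∀ x ∈ (⊤ : Subgroup Q).lowerCentralSeries 1, Ψ x * x⁻¹ = 1 := by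
      intro Ψ hΨ x hx
      set dh : Q →* Q := MonoidHom.mk' (fun q => Ψ q * q⁻¹) (hd_mul Ψ hΨ) with hdh
      have hkerdh : (⊤ : Subgroup Q).lowerCentralSeries 1 ≤ dh.ker := by
        rw [Subgroup.top_lowerCentralSeries_one, commutator_def, Subgroup.commutator_le]
        intro a _ b _
        rw [MonoidHom.mem_ker, map_commutatorElement]
        exact commutatorElement_eq_one_iff_mul_comm.mpr
          (hcentral _ (hΨ a) (dh b))
      exact hkerdh hx
    -- product formula on the kernel
    have hprod : ∀ a b : MulAut Q, (∀ q : Q, a q * q⁻¹ ∈ L) → (∀ q : Q, b q * q⁻¹ ∈ L) →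
        ∀ q : Q, (a * b) q = (a q * q⁻¹) * (b q * q⁻¹) * q := by
      intro a b ha hb q
      have h2 : b q = (b q * q⁻¹) * q := by group
      calc (a * b) q = a (b q) := rfl
        _ = a (b q) * (b q)⁻¹ * (b q) := by group
        _ = a ((b q * q⁻¹) * q) * ((b q * q⁻¹) * q)⁻¹ * (b q) := by rw [← h2]
        _ = (a (b q * q⁻¹) * (b q * q⁻¹)⁻¹) * (a q * q⁻¹) * (b q) := by
              rw [hd_mul a ha]
        _ = (a q * q⁻¹) * (b q) := by
              rw [hd_lcs1 a ha _ (hL1 (hb q)), one_mul]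
        _ = (a q * q⁻¹) * (b q * q⁻¹) * q := by group
    have habelian : ∀ a b : MulAut Q, a ∈ r.ker → b ∈ r.ker → a * b = b * a := by
      intro a b ha hb
      have ha' := (hker a).mp ha
      have hb' := (hker b).mp hb
      refine MulEquiv.ext fun q => ?_
      rw [hprod a b ha' hb' q, hprod b a hb' ha' q,
        hcentral _ (ha' q) (b q * q⁻¹)]
    refine ⟨habelian, ?_⟩
    -- abelianness of G/Γ₂G
    have habel1 : ∀ u v : G ⧸ (⊤ : Subgroup G).lowerCentralSeries 1, u * v = v * u := by
      intro u v
      induction u using QuotientGroup.induction_on with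
      | H a =>
        induction v using QuotientGroup.induction_on with
        | H b =>
          have key : ((a * b : G) : G ⧸ (⊤ : Subgroup G).lowerCentralSeries 1)
              = ((b * a : G) : G ⧸ (⊤ : Subgroup G).lowerCentralSeries 1) := by
            rw [QuotientGroup.eq]
            have hc : ⁅b⁻¹, a⁻¹⁆ ∈ (⊤ : Subgroup G).lowerCentralSeries 1 := by
              rw [Subgroup.top_lowerCentralSeries_one, commutator_def]
              exact Subgroup.commutator_mem_commutator (Subgroup.mem_top _) (Subgroup.mem_top _)
            simpa [commutatorElement_def, mul_assoc] using hc
          exact key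
    -- the projection p : Q → G/Γ₂G
    have hNle : N ≤ ((⊤ : Subgroup G).lowerCentralSeries 1).comap (MonoidHom.id G) := by
      intro g hg
      exact Subgroup.lowerCentralSeries_antitone _ (by omega : 1 ≤ k + 1) hg
    set p : Q →* G ⧸ (⊤ : Subgroup G).lowerCentralSeries 1 :=
      QuotientGroup.map N ((⊤ : Subgroup G).lowerCentralSeries 1) (MonoidHom.id G) hNle with hp
    have hpmk : ∀ g : G, p (QuotientGroup.mk g) = QuotientGroup.mk g := fun g =>
      QuotientGroup.map_mk N ((⊤ : Subgroup G).lowerCentralSeries 1) (MonoidHom.id G) hNle g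
    have hpL : ∀ x ∈ (⊤ : Subgroup Q).lowerCentralSeries 1, p x = 1 := by
      intro x hx
      have hkp : (⊤ : Subgroup Q).lowerCentralSeries 1 ≤ p.ker := by
        rw [Subgroup.top_lowerCentralSeries_one, commutator_def, Subgroup.commutator_le]
        intro a _ b _
        rw [MonoidHom.mem_ker, map_commutatorElement]
        exact commutatorElement_eq_one_iff_mul_comm.mpr (habel1 _ _)
      exact hkp hx
    set A := Subgroup.map (QuotientGroup.mk' N) ((⊤ : Subgroup G).lowerCentralSeries k) with hA
    have hmemA : ∀ x : Q, x ∈ L → x ∈ A := fun x hx => by rw [h1]; exact hx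
    have hAL : ∀ x : A, (x : Q) ∈ L := fun x => by
      rw [← h1]; exact x.2
    have hΨmem : ∀ Ψ : r.ker, ∀ q : Q, (Ψ : MulAut Q) q * q⁻¹ ∈ L :=
      fun Ψ => (hker _).mp Ψ.2
    -- forward map
    set dhom : r.ker → (G →* A) := fun Ψ =>
      MonoidHom.mk' (fun g => ⟨(Ψ : MulAut Q) (QuotientGroup.mk g) * (QuotientGroup.mk g)⁻¹,
          hmemA _ (hΨmem Ψ _)⟩)
        (by
          intro a b
          refine Subtype.ext ?_
          show (Ψ : MulAut Q) (QuotientGroup.mk (a * b)) * (QuotientGroup.mk (a * b))⁻¹ = _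
          rw [QuotientGroup.mk_mul]
          exact hd_mul _ (hΨmem Ψ) _ _) with hdhom
    have hdcond : ∀ Ψ : r.ker, (⊤ : Subgroup G).lowerCentralSeries 1 ≤ (dhom Ψ).ker := by
      intro Ψ g hg
      have hmk : (QuotientGroup.mk g : Q) ∈ (⊤ : Subgroup Q).lowerCentralSeries 1 := by
        rw [← aux_lcs_map (QuotientGroup.mk' N) hπ 1]
        exact ⟨g, hg, rfl⟩
      rw [MonoidHom.mem_ker]
      exact Subtype.ext (hd_lcs1 _ (hΨmem Ψ) _ hmk)
    set θfun : r.ker → ((G ⧸ (⊤ : Subgroup G).lowerCentralSeries 1) →* A) := fun Ψ =>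
      QuotientGroup.lift ((⊤ : Subgroup G).lowerCentralSeries 1) (dhom Ψ) (hdcond Ψ) with hθfun
    have hθmk : ∀ (Ψ : r.ker) (g : G),
        ((θfun Ψ (QuotientGroup.mk g) : A) : Q)
          = (Ψ : MulAut Q) (QuotientGroup.mk g) * (QuotientGroup.mk g)⁻¹ := by
      intro Ψ g
      rfl
    -- inverse map
    have hfL : ∀ (f : (G ⧸ (⊤ : Subgroup G).lowerCentralSeries 1) →* A) (y : G ⧸ (⊤ : Subgroup G).lowerCentralSeries 1),
        ((f y : A) : Q) ∈ L := fun f y => hAL (f y)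
    have hpf : ∀ (f : (G ⧸ (⊤ : Subgroup G).lowerCentralSeries 1) →* A) (y : G ⧸ (⊤ : Subgroup G).lowerCentralSeries 1),
        p ((f y : A) : Q) = 1 := fun f y => hpL _ (hL1 (hfL f y))
    set Ψf : ((G ⧸ (⊤ : Subgroup G).lowerCentralSeries 1) →* A) → MulAut Q := fun f =>
      { toFun := fun q => ((f (p q) : A) : Q) * q
        invFun := fun q => (((f (p q) : A) : Q))⁻¹ * q
        left_inv := by
          intro q
          show (((f (p (((f (p q) : A) : Q) * q)) : A) : Q))⁻¹ * (((f (p q) : A) : Q) * q) = q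
          rw [map_mul, hpf, one_mul, inv_mul_cancel_left]
        right_inv := by
          intro q
          show ((f (p ((((f (p q) : A) : Q))⁻¹ * q)) : A) : Q) * ((((f (p q) : A) : Q))⁻¹ * q) = q
          rw [map_mul, map_inv, hpf, inv_one, one_mul, mul_inv_cancel_left]
        map_mul' := by
          intro x y
          show ((f (p (x * y)) : A) : Q) * (x * y)
            = (((f (p x) : A) : Q) * x) * (((f (p y) : A) : Q) * y)
          rw [map_mul, map_mul, Subgroup.coe_mul]
          have hc := hcentral _ (hfL f (p y)) x
          calc ((f (p x) : A) : Q) * ((f (p y) : A) : Q) * (x * y)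
              = ((f (p x) : A) : Q) * (((f (p y) : A) : Q) * x) * y := by group
            _ = ((f (p x) : A) : Q) * (x * ((f (p y) : A) : Q)) * y := by rw [hc]
            _ = (((f (p x) : A) : Q) * x) * (((f (p y) : A) : Q) * y) := by group } with hΨf
    have hΨfker : ∀ f, Ψf f ∈ r.ker := by
      intro f
      rw [hker]
      intro q
      show ((f (p q) : A) : Q) * q * q⁻¹ ∈ L
      rw [mul_inv_cancel_right]
      exact hfL f (p q)
    set θinv : ((G ⧸ (⊤ : Subgroup G).lowerCentralSeries 1) →* A) → r.ker := fun f =>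
      ⟨Ψf f, hΨfker f⟩ with hθinv
    have hleft : ∀ Ψ : r.ker, θinv (θfun Ψ) = Ψ := by
      intro Ψ
      refine Subtype.ext (MulEquiv.ext fun q => ?_)
      induction q using QuotientGroup.induction_on with
      | H g =>
        show ((θfun Ψ (p (QuotientGroup.mk g)) : A) : Q) * QuotientGroup.mk g
          = (Ψ : MulAut Q) (QuotientGroup.mk g)
        rw [hpmk, hθmk, inv_mul_cancel_right]
    have hright : ∀ f, θfun (θinv f) = f := by
      intro f
      refine MonoidHom.ext fun x => ?_
      induction x using QuotientGroup.induction_on with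
      | H g =>
        refine Subtype.ext ?_
        rw [hθmk]
        show ((f (p (QuotientGroup.mk g)) : A) : Q) * QuotientGroup.mk g
            * (QuotientGroup.mk g)⁻¹ = ((f (QuotientGroup.mk g) : A) : Q)
        rw [mul_inv_cancel_right, hpmk]
    refine ⟨⟨θfun, θinv, hleft, hright⟩, ?_, ?_⟩
    · intro Ψ g
      exact hθmk Ψ g
    · intro Ψ Φ x
      induction x using QuotientGroup.induction_on with
      | H g =>
        refine Subtype.ext ?_
        show ((θfun (Ψ * Φ) (QuotientGroup.mk g) : A) : Q)
          = ((θfun Ψ (QuotientGroup.mk g) : A) : Q) * ((θfun Φ (QuotientGroup.mk g) : A) : Q)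
        rw [hθmk, hθmk, hθmk]
        have hmul : ((Ψ * Φ : r.ker) : MulAut Q) = (Ψ : MulAut Q) * (Φ : MulAut Q) := rfl
        rw [hmul, hprod _ _ (hΨmem Ψ) (hΨmem Φ) (QuotientGroup.mk g)]
        group
        rfl
end

section
/- Let F be a free group of finite rank and let k ≥ 1. Then the natural group homomorphism Aut(F/Γ_{k+2}F) → Aut(F/Γ_{k+1}F), induced by the canonical projection F/Γ_{k+2}F → F/Γ_{k+1}F, is surjective: every automorphism of the free nilpotent group F/Γ_{k+1}F lifts to an automorphism of F/Γ_{k+2}F. -/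
open scoped commutatorElement

private lemma lcs_map_surj' {G H : Type*} [Group G] [Group H] (f : G →* H)
    (hf : Function.Surjective f) (m : ℕ) :
    Subgroup.map f ((⊤ : Subgroup G).lowerCentralSeries m) = (⊤ : Subgroup H).lowerCentralSeries m := by
  induction m with
  | zero => simpa using Subgroup.map_top_of_surjective f hf
  | succ m ih =>
    show Subgroup.map f ⁅(⊤ : Subgroup G).lowerCentralSeries m, ⊤⁆ = ⁅(⊤ : Subgroup H).lowerCentralSeries m, ⊤⁆
    rw [Subgroup.map_commutator, ih, Subgroup.map_top_of_surjective f hf]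

private lemma lcs_mono' {G : Type*} [Group G] {S T : Subgroup G} (h : S ≤ T) (m : ℕ) :
    S.lowerCentralSeries m ≤ T.lowerCentralSeries m := by
  induction m with
  | zero => exact h
  | succ m ih => exact Subgroup.commutator_mono ih h

private lemma comm_central' {N : Type*} [Group N] {z w : N} (p q : N)
    (hz : ∀ a : N, z * a = a * z) (hw : ∀ a : N, w * a = a * w) :
    ⁅p * z, q * w⁆ = ⁅p, q⁆ := by
  have hz1 : ∀ a : N, z * a * z⁻¹ = a := fun a => by
    rw [hz a, mul_assoc, mul_inv_cancel, mul_one]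
  have hw1 : ∀ a : N, w * a * w⁻¹ = a := fun a => by
    rw [hw a, mul_assoc, mul_inv_cancel, mul_one]
  have h1 : (p * z) * (q * w) * (p * z)⁻¹ * (q * w)⁻¹
      = p * (z * (q * w) * z⁻¹) * p⁻¹ * (w⁻¹ * q⁻¹) := by group
  show (p * z) * (q * w) * (p * z)⁻¹ * (q * w)⁻¹ = p * q * p⁻¹ * q⁻¹
  rw [h1, hz1]
  have h2 : p * (q * w) * p⁻¹ * (w⁻¹ * q⁻¹) = p * q * (w * p⁻¹ * w⁻¹) * q⁻¹ := by group
  rw [h2, hw1]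

private lemma endo_bijective' {N : Type*} [Group N] {k : ℕ} (hk : 1 ≤ k)
    (hbot : (⊤ : Subgroup N).lowerCentralSeries (k + 1) = ⊥) (u : N →* N)
    (hu : ∀ x : N, x⁻¹ * u x ∈ (⊤ : Subgroup N).lowerCentralSeries k) : Function.Bijective u := by
  have hcent : ∀ z ∈ (⊤ : Subgroup N).lowerCentralSeries k, ∀ a : N, z * a = a * z := by
    intro z hz a
    have h : ⁅z, a⁆ ∈ (⊤ : Subgroup N).lowerCentralSeries (k + 1) :=
      Subgroup.commutator_mem_commutator hz (Subgroup.mem_top a)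
    rw [hbot, Subgroup.mem_bot, commutatorElement_eq_one_iff_mul_comm] at h
    exact h
  -- u fixes `(⊤ : Subgroup N).lowerCentralSeries k` pointwise
  have hfix : ∀ z ∈ (⊤ : Subgroup N).lowerCentralSeries k, u z = z := by
    obtain ⟨m, rfl⟩ : ∃ m, k = m + 1 := ⟨k - 1, (Nat.succ_pred_eq_of_pos hk).symm⟩
    intro z hz
    rw [show (⊤ : Subgroup N).lowerCentralSeries (m + 1) = ⁅(⊤ : Subgroup N).lowerCentralSeries m, ⊤⁆ from rfl,
      Subgroup.commutator_def] at hz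
    refine Subgroup.closure_induction ?_ (by simp) ?_ ?_ hz
    · rintro x ⟨a, ha, b, -, rfl⟩
      have hua : u a = a * (a⁻¹ * u a) := by group
      have hub : u b = b * (b⁻¹ * u b) := by group
      rw [map_commutatorElement, hua, hub,
        comm_central' a b (hcent _ (hu a)) (hcent _ (hu b))]
    · intro x y _ _ hx hy
      rw [map_mul, hx, hy]
    · intro x _ hx
      rw [map_inv, hx]
  constructor
  · rw [injective_iff_map_eq_one]
    intro x hx
    have h1 : x⁻¹ ∈ (⊤ : Subgroup N).lowerCentralSeries k := by
      have := hu x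
      rwa [hx, mul_one] at this
    have h2 : x ∈ (⊤ : Subgroup N).lowerCentralSeries k := by
      simpa using ((⊤ : Subgroup N).lowerCentralSeries k).inv_mem h1
    have := hfix x h2
    rw [hx] at this
    exact this.symm
  · intro y
    refine ⟨y * (y⁻¹ * u y)⁻¹, ?_⟩
    rw [map_mul, map_inv, hfix _ (hu y)]
    group

/-- Let `F` be a free group of finite rank and `k ≥ 1` (here `Γ_{i+1}F` is
`(⊤ : Subgroup F).lowerCentralSeries i`).  Then the natural group homomorphism
`Aut(F/Γ_{k+2}F) → Aut(F/Γ_{k+1}F)` induced by the canonical projection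
`F/Γ_{k+2}F → F/Γ_{k+1}F` is surjective: every automorphism `φ` of the free nilpotent group
`F/Γ_{k+1}F` lifts to an automorphism `Ψ` of `F/Γ_{k+2}F`. -/
theorem stmt_7 (n : ℕ) (k : ℕ) (hk : 1 ≤ k) :
    ∀ φ : MulAut (FreeGroup (Fin n) ⧸ (⊤ : Subgroup (FreeGroup (Fin n))).lowerCentralSeries k),
      ∃ Ψ : MulAut (FreeGroup (Fin n) ⧸ (⊤ : Subgroup (FreeGroup (Fin n))).lowerCentralSeries (k + 1)),
        ∀ g : FreeGroup (Fin n),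
          QuotientGroup.map ((⊤ : Subgroup (FreeGroup (Fin n))).lowerCentralSeries (k + 1))
              ((⊤ : Subgroup (FreeGroup (Fin n))).lowerCentralSeries k) (MonoidHom.id (FreeGroup (Fin n)))
              (fun x hx => Subgroup.mem_comap.mpr
                ((⊤ : Subgroup (FreeGroup (Fin n))).lowerCentralSeries_antitone (Nat.le_succ k) hx))
              (Ψ (QuotientGroup.mk g))
            = φ (QuotientGroup.mk g) := by
  intro φ
  set G := FreeGroup (Fin n) with hG
  set K := (⊤ : Subgroup G).lowerCentralSeries k with hK
  set K' := (⊤ : Subgroup G).lowerCentralSeries (k + 1) with hK'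
  set π : (G ⧸ K') →* (G ⧸ K) :=
    QuotientGroup.map K' K (MonoidHom.id G)
      (fun x hx => Subgroup.mem_comap.mpr
        ((⊤ : Subgroup G).lowerCentralSeries_antitone (Nat.le_succ k) hx)) with hπ
  have hπmk : ∀ g : G, π (QuotientGroup.mk g) = QuotientGroup.mk g := by
    intro g; rw [hπ, QuotientGroup.map_mk]; rfl
  -- the quotient `G ⧸ K'` has trivial (k+1)-st lower central series term
  have hbot : (⊤ : Subgroup (G ⧸ K')).lowerCentralSeries (k + 1) = ⊥ := by
    rw [← lcs_map_surj' (QuotientGroup.mk' K') (QuotientGroup.mk'_surjective K') (k + 1),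
      Subgroup.map_eq_bot_iff, QuotientGroup.ker_mk']
  -- lifting of endomorphisms
  have lift : ∀ ψ : (G ⧸ K) →* (G ⧸ K), ∃ e : (G ⧸ K') →* (G ⧸ K'),
      ∀ g : G, π (e (QuotientGroup.mk g)) = ψ (QuotientGroup.mk g) := by
    intro ψ
    choose a ha using fun i : Fin n =>
      QuotientGroup.mk'_surjective K (ψ (QuotientGroup.mk (FreeGroup.of i)))
    let f : G →* (G ⧸ K') := FreeGroup.lift fun i => (QuotientGroup.mk (a i) : G ⧸ K')
    have hker : K' ≤ f.ker := by
      intro x hx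
      have h1 : f x ∈ (⊤ : Subgroup (G ⧸ K')).lowerCentralSeries (k + 1) :=
        lcs_mono' (S := (⊤ : Subgroup G).map f) (le_top) (k + 1) (by
          rw [← Subgroup.map_lowerCentralSeries]; exact ⟨x, hx, rfl⟩)
      rw [hbot, Subgroup.mem_bot] at h1
      exact h1
    refine ⟨QuotientGroup.lift K' f hker, ?_⟩
    have hcomm : π.comp f = ψ.comp (QuotientGroup.mk' K) := by
      apply FreeGroup.ext_hom
      intro i
      show π (f (FreeGroup.of i)) = ψ (QuotientGroup.mk (FreeGroup.of i))
      have : f (FreeGroup.of i) = (QuotientGroup.mk (a i) : G ⧸ K') :=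
        FreeGroup.lift_apply_of
      rw [this, hπmk]
      exact ha i
    intro g
    have h2 : QuotientGroup.lift K' f hker (QuotientGroup.mk g) = f g := rfl
    rw [h2]
    exact congrFun (congrArg (fun h : G →* (G ⧸ K) => ⇑h) hcomm) g
  obtain ⟨e, he⟩ := lift φ.toMonoidHom
  obtain ⟨e', he'⟩ := lift φ.symm.toMonoidHom
  -- e and e' commute with π against φ and φ.symm on all elements
  have heπ : ∀ x : G ⧸ K', π (e x) = φ (π x) := by
    intro x
    obtain ⟨g, rfl⟩ := QuotientGroup.mk'_surjective K' x
    rw [show QuotientGroup.mk' K' g = QuotientGroup.mk g from rfl, he g, hπmk]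
    rfl
  have heπ' : ∀ x : G ⧸ K', π (e' x) = φ.symm (π x) := by
    intro x
    obtain ⟨g, rfl⟩ := QuotientGroup.mk'_surjective K' x
    rw [show QuotientGroup.mk' K' g = QuotientGroup.mk g from rfl, he' g, hπmk]
    rfl
  -- any endomorphism u with π ∘ u = π satisfies the hypothesis of endo_bijective'
  have hmem : ∀ u : (G ⧸ K') →* (G ⧸ K'), (∀ x, π (u x) = π x) →
      ∀ x : G ⧸ K', x⁻¹ * u x ∈ (⊤ : Subgroup (G ⧸ K')).lowerCentralSeries k := by
    intro u hu x
    obtain ⟨g, rfl⟩ := QuotientGroup.mk'_surjective K' x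
    obtain ⟨h, hh⟩ := QuotientGroup.mk'_surjective K' (u (QuotientGroup.mk' K' g))
    have h1 : π (QuotientGroup.mk' K' h) = π (QuotientGroup.mk' K' g) := by
      rw [hh]; exact hu _
    rw [show QuotientGroup.mk' K' h = QuotientGroup.mk h from rfl,
      show QuotientGroup.mk' K' g = QuotientGroup.mk g from rfl, hπmk, hπmk] at h1
    have h2 : g⁻¹ * h ∈ K := (QuotientGroup.eq (s := K)).mp h1.symm
    rw [← lcs_map_surj' (QuotientGroup.mk' K') (QuotientGroup.mk'_surjective K') k]
    refine ⟨g⁻¹ * h, h2, ?_⟩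
    rw [map_mul, map_inv]
    rw [show QuotientGroup.mk' K' g = QuotientGroup.mk g from rfl] at hh ⊢
    rw [hh]
  -- e' ∘ e and e ∘ e' induce the identity mod K
  have hu1 : ∀ x, π ((e'.comp e) x) = π x := by
    intro x
    rw [MonoidHom.comp_apply, heπ', heπ]
    exact φ.symm_apply_apply (π x)
  have hu2 : ∀ x, π ((e.comp e') x) = π x := by
    intro x
    rw [MonoidHom.comp_apply, heπ, heπ']
    exact φ.apply_symm_apply (π x)
  have hb1 : Function.Bijective (e'.comp e) :=
    endo_bijective' hk hbot _ (hmem _ hu1)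
  have hb2 : Function.Bijective (e.comp e') :=
    endo_bijective' hk hbot _ (hmem _ hu2)
  have hbij : Function.Bijective e := by
    constructor
    · exact Function.Injective.of_comp (f := ⇑e') hb1.1
    · exact Function.Surjective.of_comp (g := ⇑e') hb2.2
  refine ⟨MulEquiv.ofBijective e hbij, ?_⟩
  intro g
  exact he g
end

section
/- Let G be a group. For each k ≥ 1 define the subset A_k(G) = {φ ∈ Aut(G) : φ(x)·x⁻¹ ∈ Γ_{k+1}G for all x ∈ G} of the automorphism group of G. Then each A_k(G) is a subgroup of Aut(G), the sequence A₁(G) ⊇ A₂(G) ⊇ ⋯ is descending, and [A_k(G), A_l(G)] ⊆ A_{k+l}(G) for all k, l ≥ 1; that is, for φ ∈ A_k(G) and ψ ∈ A_l(G), the commutator φψφ⁻¹ψ⁻¹ satisfies (φψφ⁻¹ψ⁻¹)(x)·x⁻¹ ∈ Γ_{k+l+1}G for all x ∈ G. (This is the N-series property of the Johnson filtration, transported through the Dehn–Nielsen representation.) -/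
open Subgroup
open scoped commutatorElement

section Aux
variable {G : Type*} [Group G]

lemma lcs_succ' (n : ℕ) :
    (⊤ : Subgroup G).lowerCentralSeries (n + 1) = ⁅(⊤ : Subgroup G).lowerCentralSeries n, ⊤⁆ := rfl

/-- Three subgroups lemma, relative version. -/
lemma my_three_subgroups (A B C N : Subgroup G) [N.Normal]
    (h1 : ⁅⁅B, C⁆, A⁆ ≤ N) (h2 : ⁅⁅C, A⁆, B⁆ ≤ N) : ⁅⁅A, B⁆, C⁆ ≤ N := by
  have key : ∀ X : Subgroup G, X ≤ N ↔ X.map (QuotientGroup.mk' N) = ⊥ := by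
    intro X
    rw [Subgroup.map_eq_bot_iff, QuotientGroup.ker_mk']
  rw [key] at h1 h2 ⊢
  rw [Subgroup.map_commutator, Subgroup.map_commutator] at h1 h2 ⊢
  exact Subgroup.commutator_commutator_eq_bot_of_rotate h1 h2

lemma my_lcs_comm (i j : ℕ) :
    ⁅(⊤ : Subgroup G).lowerCentralSeries i, (⊤ : Subgroup G).lowerCentralSeries j⁆ ≤ (⊤ : Subgroup G).lowerCentralSeries (i + j + 1) := by
  induction j generalizing i with
  | zero =>
    have h0 : (⊤ : Subgroup G).lowerCentralSeries 0 = (⊤ : Subgroup G) := rfl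
    rw [h0]
    exact (lcs_succ' (G := G) i) ▸ le_rfl
  | succ j ih =>
    rw [lcs_succ' (G := G) j, Subgroup.commutator_comm]
    apply my_three_subgroups
    · calc ⁅⁅(⊤ : Subgroup G), (⊤ : Subgroup G).lowerCentralSeries i⁆, (⊤ : Subgroup G).lowerCentralSeries j⁆
          ≤ ⁅(⊤ : Subgroup G).lowerCentralSeries (i + 1), (⊤ : Subgroup G).lowerCentralSeries j⁆ := by
            apply Subgroup.commutator_mono _ le_rfl
            rw [Subgroup.commutator_comm, ← lcs_succ' (G := G) i]
        _ ≤ (⊤ : Subgroup G).lowerCentralSeries (i + 1 + j + 1) := ih (i + 1)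
        _ = (⊤ : Subgroup G).lowerCentralSeries (i + (j + 1) + 1) := by ring_nf
    · calc ⁅⁅(⊤ : Subgroup G).lowerCentralSeries i, (⊤ : Subgroup G).lowerCentralSeries j⁆, (⊤ : Subgroup G)⁆
          ≤ ⁅(⊤ : Subgroup G).lowerCentralSeries (i + j + 1), (⊤ : Subgroup G)⁆ :=
            Subgroup.commutator_mono (ih i) le_rfl
        _ = (⊤ : Subgroup G).lowerCentralSeries (i + j + 1 + 1) := (lcs_succ' (G := G) _).symm
        _ = (⊤ : Subgroup G).lowerCentralSeries (i + (j + 1) + 1) := by ring_nf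

/-- The "twist subgroup": elements `a` with `φ a * a⁻¹ ∈ N`, for `N` normal. -/
def twistSubgroup (φ : MulAut G) (N : Subgroup G) [N.Normal] : Subgroup G where
  carrier := {a | φ a * a⁻¹ ∈ N}
  one_mem' := by simpa using one_mem N
  mul_mem' := by
    intro a b ha hb
    have : φ (a * b) * (a * b)⁻¹ = (φ a * a⁻¹) * (a * (φ b * b⁻¹) * a⁻¹) := by
      simp [mul_assoc]
    rw [Set.mem_setOf_eq, this]
    exact mul_mem ha (Subgroup.Normal.conj_mem ‹N.Normal› _ hb a)
  inv_mem' := by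
    intro a ha
    have : φ a⁻¹ * (a⁻¹)⁻¹ = (a⁻¹ * (φ a * a⁻¹) * a⁻¹⁻¹)⁻¹ := by
      simp [mul_assoc]
    rw [Set.mem_setOf_eq, this]
    exact inv_mem (Subgroup.Normal.conj_mem ‹N.Normal› _ ha a⁻¹)

lemma quot_comm {N : Subgroup G} [N.Normal] {u v : G} (h : ⁅u, v⁆ ∈ N) :
    ((u : G ⧸ N)) * v = (v : G ⧸ N) * u := by
  have h1 : ((⁅u, v⁆ : G) : G ⧸ N) = 1 := (QuotientGroup.eq_one_iff _).mpr h
  have h2 : ⁅(u : G ⧸ N), (v : G ⧸ N)⁆ = 1 := by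
    show ⁅(QuotientGroup.mk' N) u, (QuotientGroup.mk' N) v⁆ = 1
    rw [← map_commutatorElement (QuotientGroup.mk' N) u v]
    exact h1
  exact commutatorElement_eq_one_iff_mul_comm.mp h2

lemma comm_aux {Q : Type*} [Group Q] (A B g h : Q) (hA : ∀ y, A * y = y * A)
    (hgB : g * B = B * g) (hB : B * ⁅g, h⁆ = ⁅g, h⁆ * B) : ⁅A * g, B * h⁆ = ⁅g, h⁆ := by
  have e1 : ⁅A * g, B * h⁆ = A * (g * (B * h) * g⁻¹) * A⁻¹ * (B * h)⁻¹ := by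
    rw [commutatorElement_def]; group
  rw [e1, hA, mul_inv_cancel_right]
  have e2 : g * (B * h) * g⁻¹ * (B * h)⁻¹ = B * (g * h * g⁻¹ * h⁻¹) * B⁻¹ := by
    rw [← mul_assoc g B h, hgB]; group
  rw [e2, ← commutatorElement_def, hB, mul_inv_cancel_right]

/-- Key lemma: the automorphisms in `A_k` act trivially on successive quotients shifted
by `k`. -/
lemma key_lemma (φ : MulAut G) (k : ℕ)
    (hφ : ∀ x : G, φ x * x⁻¹ ∈ (⊤ : Subgroup G).lowerCentralSeries k) :
    ∀ m, ∀ a ∈ (⊤ : Subgroup G).lowerCentralSeries m, φ a * a⁻¹ ∈ (⊤ : Subgroup G).lowerCentralSeries (m + k) := by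
  intro m
  induction m with
  | zero => intro a _; simpa using hφ a
  | succ m ih =>
    set N := (⊤ : Subgroup G).lowerCentralSeries (m + k + 1) with hNdef
    have hle : (⊤ : Subgroup G).lowerCentralSeries (m + 1) ≤ twistSubgroup φ N := by
      rw [lcs_succ' (G := G) m, Subgroup.commutator_le]
      intro g hg h _
      show φ ⁅g, h⁆ * ⁅g, h⁆⁻¹ ∈ N
      set a' := φ g * g⁻¹ with ha'def
      have ha' : a' ∈ (⊤ : Subgroup G).lowerCentralSeries (m + k) := ih g hg
      set b := φ h * h⁻¹ with hbdef
      have hb : b ∈ (⊤ : Subgroup G).lowerCentralSeries k := hφ h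
      have hφg : φ g = a' * g := by rw [ha'def, inv_mul_cancel_right]
      have hφh : φ h = b * h := by rw [hbdef, inv_mul_cancel_right]
      have hA : ∀ y : G ⧸ N, (a' : G ⧸ N) * y = y * (a' : G ⧸ N) := by
        intro y
        obtain ⟨v, rfl⟩ := QuotientGroup.mk_surjective y
        refine quot_comm ?_
        have : ⁅a', v⁆ ∈ ⁅(⊤ : Subgroup G).lowerCentralSeries (m + k), (⊤ : Subgroup G)⁆ :=
          commutator_mem_commutator ha' (mem_top v)
        rwa [← lcs_succ' (G := G) (m + k)] at this
      have hgb : ((g : G ⧸ N)) * (b : G ⧸ N) = (b : G ⧸ N) * (g : G ⧸ N) := by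
        refine quot_comm ?_
        exact my_lcs_comm m k (commutator_mem_commutator hg hb)
      have hghmem : ⁅g, h⁆ ∈ (⊤ : Subgroup G).lowerCentralSeries (m + 1) := by
        rw [lcs_succ' (G := G) m]
        exact commutator_mem_commutator hg (mem_top h)
      have hbc : ((b : G ⧸ N)) * ((⁅g, h⁆ : G) : G ⧸ N)
          = ((⁅g, h⁆ : G) : G ⧸ N) * (b : G ⧸ N) := by
        refine quot_comm ?_
        have : ⁅b, ⁅g, h⁆⁆ ∈ (⊤ : Subgroup G).lowerCentralSeries (k + (m + 1) + 1) :=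
          my_lcs_comm k (m + 1) (commutator_mem_commutator hb hghmem)
        exact Subgroup.lowerCentralSeries_antitone _ (by omega) this
      have main : ((φ ⁅g, h⁆ : G) : G ⧸ N) = ((⁅g, h⁆ : G) : G ⧸ N) := by
        have hmap : φ ⁅g, h⁆ = ⁅a' * g, b * h⁆ := by
          rw [map_commutatorElement, hφg, hφh]
        rw [hmap]
        calc ((⁅a' * g, b * h⁆ : G) : G ⧸ N)
            = ⁅((a' * g : G) : G ⧸ N), ((b * h : G) : G ⧸ N)⁆ :=
              map_commutatorElement (QuotientGroup.mk' N) _ _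
          _ = ⁅(a' : G ⧸ N) * (g : G ⧸ N), (b : G ⧸ N) * (h : G ⧸ N)⁆ := rfl
          _ = ⁅(g : G ⧸ N), (h : G ⧸ N)⁆ := comm_aux _ _ _ _ hA hgb hbc
          _ = ((⁅g, h⁆ : G) : G ⧸ N) :=
              (map_commutatorElement (QuotientGroup.mk' N) _ _).symm
      rw [← QuotientGroup.eq_one_iff (N := N)]
      show ((φ ⁅g, h⁆ : G) : G ⧸ N) * ((⁅g, h⁆ : G) : G ⧸ N)⁻¹ = 1
      rw [main, mul_inv_cancel]
    intro a ha
    have : a ∈ twistSubgroup φ N := hle ha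
    have goal_eq : m + 1 + k = m + k + 1 := by omega
    rw [goal_eq]
    exact this

end Aux

/-- Let `G` be a group.  For each `k ≥ 1` consider the subset
`A_k(G) = {φ ∈ Aut(G) : φ(x)·x⁻¹ ∈ Γ_{k+1}G for all x}` of the automorphism group of `G`
(here `Γ_{k+1}G` is `(⊤ : Subgroup G).lowerCentralSeries k`).  Then each `A_k(G)` is a subgroup of `Aut(G)`
(it contains the identity and is closed under composition and inverses), the sequence
`A₁(G) ⊇ A₂(G) ⊇ ⋯` is descending, and `[A_k(G), A_l(G)] ⊆ A_{k+l}(G)`: for `φ ∈ A_k(G)` and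
`ψ ∈ A_l(G)`, the commutator `φψφ⁻¹ψ⁻¹` satisfies `(φψφ⁻¹ψ⁻¹)(x)·x⁻¹ ∈ Γ_{k+l+1}G` for all
`x`. -/
theorem stmt_10 (G : Type*) [Group G] :
    ∀ k l : ℕ, 1 ≤ k → 1 ≤ l →
      ((∀ x : G, (1 : MulAut G) x * x⁻¹ ∈ (⊤ : Subgroup G).lowerCentralSeries k) ∧
       (∀ φ ψ : MulAut G,
          (∀ x : G, φ x * x⁻¹ ∈ (⊤ : Subgroup G).lowerCentralSeries k) →
          (∀ x : G, ψ x * x⁻¹ ∈ (⊤ : Subgroup G).lowerCentralSeries k) →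
          ∀ x : G, (φ * ψ) x * x⁻¹ ∈ (⊤ : Subgroup G).lowerCentralSeries k) ∧
       (∀ φ : MulAut G,
          (∀ x : G, φ x * x⁻¹ ∈ (⊤ : Subgroup G).lowerCentralSeries k) →
          ∀ x : G, φ⁻¹ x * x⁻¹ ∈ (⊤ : Subgroup G).lowerCentralSeries k)) ∧
      (∀ φ : MulAut G,
        (∀ x : G, φ x * x⁻¹ ∈ (⊤ : Subgroup G).lowerCentralSeries (k + 1)) →
        ∀ x : G, φ x * x⁻¹ ∈ (⊤ : Subgroup G).lowerCentralSeries k) ∧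
      (∀ φ ψ : MulAut G,
        (∀ x : G, φ x * x⁻¹ ∈ (⊤ : Subgroup G).lowerCentralSeries k) →
        (∀ x : G, ψ x * x⁻¹ ∈ (⊤ : Subgroup G).lowerCentralSeries l) →
        ∀ x : G, (φ * ψ * φ⁻¹ * ψ⁻¹) x * x⁻¹ ∈ (⊤ : Subgroup G).lowerCentralSeries (k + l)) := by
  intro k l _hk _hl
  refine ⟨⟨?_, ?_, ?_⟩, ?_, ?_⟩
  · intro x
    simpa using one_mem ((⊤ : Subgroup G).lowerCentralSeries k)
  · intro φ ψ hφ hψ x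
    have e : (φ * ψ) x * x⁻¹ = (φ (ψ x) * (ψ x)⁻¹) * (ψ x * x⁻¹) := by
      show φ (ψ x) * x⁻¹ = _
      group
    rw [e]
    exact mul_mem (hφ (ψ x)) (hψ x)
  · intro φ hφ x
    have h := hφ (φ⁻¹ x)
    rw [MulAut.apply_inv_self G φ x] at h
    have e : φ⁻¹ x * x⁻¹ = (x * (φ⁻¹ x)⁻¹)⁻¹ := by group
    rw [e]
    exact inv_mem h
  · intro φ hφ x
    exact Subgroup.lowerCentralSeries_antitone _ (Nat.le_succ k) (hφ x)
  · intro φ ψ hφ hψ x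
    obtain ⟨z, rfl⟩ : ∃ z, x = ψ (φ z) :=
      ⟨φ⁻¹ (ψ⁻¹ x), by rw [MulAut.apply_inv_self G φ, MulAut.apply_inv_self G ψ]⟩
    have happ : (φ * ψ * φ⁻¹ * ψ⁻¹) (ψ (φ z)) = φ (ψ z) := by
      show φ (ψ (φ⁻¹ (ψ⁻¹ (ψ (φ z))))) = φ (ψ z)
      rw [MulAut.inv_apply_self G ψ, MulAut.inv_apply_self G φ]
    have key1 : φ (ψ z * z⁻¹) * (ψ z * z⁻¹)⁻¹ ∈ (⊤ : Subgroup G).lowerCentralSeries (k + l) := by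
      rw [Nat.add_comm k l]
      exact key_lemma φ k hφ l _ (hψ z)
    have key2 : ψ (φ z * z⁻¹) * (φ z * z⁻¹)⁻¹ ∈ (⊤ : Subgroup G).lowerCentralSeries (k + l) :=
      key_lemma ψ l hψ k _ (hφ z)
    have hba : ⁅ψ z * z⁻¹, φ z * z⁻¹⁆ ∈ (⊤ : Subgroup G).lowerCentralSeries (k + l) := by
      have := my_lcs_comm l k (commutator_mem_commutator (hψ z) (hφ z))
      exact Subgroup.lowerCentralSeries_antitone _ (by omega) this
    have heq : φ (ψ z) * (ψ (φ z))⁻¹ =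
        (φ (ψ z * z⁻¹) * (ψ z * z⁻¹)⁻¹) * ⁅ψ z * z⁻¹, φ z * z⁻¹⁆ *
          (ψ (φ z * z⁻¹) * (φ z * z⁻¹)⁻¹)⁻¹ := by
      simp only [map_mul, map_inv, commutatorElement_def]
      group
    rw [happ, heq]
    exact mul_mem (mul_mem key1 hba) (inv_mem key2)
end
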